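/- Weil reciprocity law for the projective line: let f and g be two nonzero rational functions in ℂ(X). Then the Weil symbol {f,g}_p equals 1 for all but finitely many p ∈ ℂ ∪ {∞} (indeed whenever ord_p f = ord_p g = 0), and the product of {f,g}_p over all p ∈ ℂ ∪ {∞} (equivalently, over any finite set containing all zeros and poles of f and of g together with ∞) equals 1. -/

import Mathlib

open Polynomial

/-- The order `ord_p f ∈ ℤ` of a rational function `f` at a finite point `p ∈ ℂ`. -/
noncomputable def ordAt (f : RatFunc ℂ) (p : ℂ) : ℤ :=
  (f.num.rootMultiplicity p : ℤ) - (f.denom.rootMultiplicity p : ℤ)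

/-- The leading Laurent coefficient `lc_p f ∈ ℂ*` of a rational function `f` at a finite
point `p ∈ ℂ`: the value at `p` of `(X - p)^{-ord_p f} · f`. -/
noncomputable def lcAt (f : RatFunc ℂ) (p : ℂ) : ℂ :=
  (f.num /ₘ (X - C p) ^ f.num.rootMultiplicity p).eval p /
    (f.denom /ₘ (X - C p) ^ f.denom.rootMultiplicity p).eval p

/-- The order of a rational function at `∞`: `ord_∞ f = deg denom - deg num = -intDegree f`
(the order in the local parameter `w = 1/z`). -/
noncomputable def ordInf (f : RatFunc ℂ) : ℤ :=
  (f.denom.natDegree : ℤ) - (f.num.natDegree : ℤ)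

/-- The leading Laurent coefficient of a rational function at `∞` (in the local parameter
`w = 1/z`): the ratio of the leading coefficients of numerator and denominator. -/
noncomputable def lcInf (f : RatFunc ℂ) : ℂ :=
  f.num.leadingCoeff / f.denom.leadingCoeff

/-- The Weil symbol `{f, g}_p` at a finite point `p ∈ ℂ`. -/
noncomputable def weilSymbolAt (f g : RatFunc ℂ) (p : ℂ) : ℂ :=
  (-1 : ℂ) ^ (ordAt f p * ordAt g p) * lcAt f p ^ (-(ordAt g p)) * lcAt g p ^ ordAt f p

/-- The Weil symbol `{f, g}_∞` at infinity. -/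
noncomputable def weilSymbolInf (f g : RatFunc ℂ) : ℂ :=
  (-1 : ℂ) ^ (ordInf f * ordInf g) * lcInf f ^ (-(ordInf g)) * lcInf g ^ ordInf f

namespace WeilAux

noncomputable def lcP (q : Polynomial ℂ) (p : ℂ) : ℂ :=
  (q /ₘ (X - C p) ^ q.rootMultiplicity p).eval p

lemma lcP_ne_zero {q : Polynomial ℂ} (hq : q ≠ 0) (p : ℂ) : lcP q p ≠ 0 :=
  eval_divByMonic_pow_rootMultiplicity_ne_zero p hq

lemma lcP_mul {q r : Polynomial ℂ} (hq : q ≠ 0) (hr : r ≠ 0) (p : ℂ) :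
    lcP (q * r) p = lcP q p * lcP r p := by
  have hm : rootMultiplicity p (q * r) = rootMultiplicity p q + rootMultiplicity p r :=
    rootMultiplicity_mul (mul_ne_zero hq hr)
  have key : q * r = (X - C p) ^ (rootMultiplicity p q + rootMultiplicity p r) *
      ((q /ₘ (X - C p) ^ rootMultiplicity p q) * (r /ₘ (X - C p) ^ rootMultiplicity p r)) := by
    conv_lhs => rw [← pow_mul_divByMonic_rootMultiplicity_eq q p,
      ← pow_mul_divByMonic_rootMultiplicity_eq r p]
    ring
  unfold lcP
  rw [hm, key, mul_divByMonic_cancel_left _ ((monic_X_sub_C p).pow _), eval_mul]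

lemma lcAt_eq (f : RatFunc ℂ) (p : ℂ) : lcAt f p = lcP f.num p / lcP f.denom p := rfl

lemma lcAt_ne_zero {f : RatFunc ℂ} (hf : f ≠ 0) (p : ℂ) : lcAt f p ≠ 0 := by
  rw [lcAt_eq]
  exact div_ne_zero (lcP_ne_zero (RatFunc.num_ne_zero hf) p)
    (lcP_ne_zero (RatFunc.denom_ne_zero f) p)

lemma lcInf_ne_zero {f : RatFunc ℂ} (hf : f ≠ 0) : lcInf f ≠ 0 :=
  div_ne_zero (leadingCoeff_ne_zero.mpr (RatFunc.num_ne_zero hf))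
    (leadingCoeff_ne_zero.mpr (RatFunc.denom_ne_zero f))

section Rep

variable {f : RatFunc ℂ} {a b : Polynomial ℂ}

lemma num_ne_zero_of_rep (ha : a ≠ 0) (hb : b ≠ 0)
    (h : f = algebraMap _ _ a / algebraMap (Polynomial ℂ) (RatFunc ℂ) b) : f.num ≠ 0 := by
  have hk : f.num * b = a * f.denom := (RatFunc.num_mul_eq_mul_denom_iff hb).mpr h
  intro h0
  rw [h0, zero_mul] at hk
  exact (mul_ne_zero ha (RatFunc.denom_ne_zero f)) hk.symm

lemma ordAt_rep (ha : a ≠ 0) (hb : b ≠ 0)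
    (h : f = algebraMap _ _ a / algebraMap (Polynomial ℂ) (RatFunc ℂ) b) (p : ℂ) :
    ordAt f p = (rootMultiplicity p a : ℤ) - rootMultiplicity p b := by
  have hk : f.num * b = a * f.denom := (RatFunc.num_mul_eq_mul_denom_iff hb).mpr h
  have hn : f.num ≠ 0 := num_ne_zero_of_rep ha hb h
  have e1 : rootMultiplicity p (f.num * b) = rootMultiplicity p f.num + rootMultiplicity p b :=
    rootMultiplicity_mul (mul_ne_zero hn hb)
  have e2 : rootMultiplicity p (a * f.denom) = rootMultiplicity p a + rootMultiplicity p f.denom :=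
    rootMultiplicity_mul (mul_ne_zero ha (RatFunc.denom_ne_zero f))
  rw [hk, e2] at e1
  unfold ordAt
  omega

lemma lcAt_rep (ha : a ≠ 0) (hb : b ≠ 0)
    (h : f = algebraMap _ _ a / algebraMap (Polynomial ℂ) (RatFunc ℂ) b) (p : ℂ) :
    lcAt f p = lcP a p / lcP b p := by
  have hk : f.num * b = a * f.denom := (RatFunc.num_mul_eq_mul_denom_iff hb).mpr h
  have hn : f.num ≠ 0 := num_ne_zero_of_rep ha hb h
  have e1 : lcP f.num p * lcP b p = lcP a p * lcP f.denom p := by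
    rw [← lcP_mul hn hb, ← lcP_mul ha (RatFunc.denom_ne_zero f), hk]
  rw [lcAt_eq, div_eq_div_iff (lcP_ne_zero (RatFunc.denom_ne_zero f) p) (lcP_ne_zero hb p)]
  exact e1
lemma ordInf_rep (ha : a ≠ 0) (hb : b ≠ 0)
    (h : f = algebraMap _ _ a / algebraMap (Polynomial ℂ) (RatFunc ℂ) b) :
    ordInf f = (b.natDegree : ℤ) - a.natDegree := by
  have hk : f.num * b = a * f.denom := (RatFunc.num_mul_eq_mul_denom_iff hb).mpr h
  have hn : f.num ≠ 0 := num_ne_zero_of_rep ha hb h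
  have e1 : (f.num * b).natDegree = f.num.natDegree + b.natDegree := natDegree_mul hn hb
  have e2 : (a * f.denom).natDegree = a.natDegree + f.denom.natDegree :=
    natDegree_mul ha (RatFunc.denom_ne_zero f)
  rw [hk, e2] at e1
  unfold ordInf
  omega

lemma lcInf_rep (ha : a ≠ 0) (hb : b ≠ 0)
    (h : f = algebraMap _ _ a / algebraMap (Polynomial ℂ) (RatFunc ℂ) b) :
    lcInf f = a.leadingCoeff / b.leadingCoeff := by
  have hk : f.num * b = a * f.denom := (RatFunc.num_mul_eq_mul_denom_iff hb).mpr h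
  have hn : f.num ≠ 0 := num_ne_zero_of_rep ha hb h
  have e1 : (f.num * b).leadingCoeff = f.num.leadingCoeff * b.leadingCoeff := leadingCoeff_mul _ _
  have e2 : (a * f.denom).leadingCoeff = a.leadingCoeff * f.denom.leadingCoeff :=
    leadingCoeff_mul _ _
  rw [hk, e2] at e1
  unfold lcInf
  rw [div_eq_div_iff (leadingCoeff_ne_zero.mpr (RatFunc.denom_ne_zero f))
    (leadingCoeff_ne_zero.mpr hb)]
  exact e1.symm

end Rep

section Mul

variable {f g : RatFunc ℂ}

lemma mul_rep (f g : RatFunc ℂ) :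
    f * g = algebraMap _ _ (f.num * g.num) / algebraMap (Polynomial ℂ) (RatFunc ℂ)
      (f.denom * g.denom) := by
  conv_lhs => rw [← RatFunc.num_div_denom f, ← RatFunc.num_div_denom g]
  rw [div_mul_div_comm, ← map_mul, ← map_mul]

lemma ordAt_mul (hf : f ≠ 0) (hg : g ≠ 0) (p : ℂ) :
    ordAt (f * g) p = ordAt f p + ordAt g p := by
  rw [ordAt_rep (mul_ne_zero (RatFunc.num_ne_zero hf) (RatFunc.num_ne_zero hg))
    (mul_ne_zero (RatFunc.denom_ne_zero f) (RatFunc.denom_ne_zero g)) (mul_rep f g) p,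
    rootMultiplicity_mul (mul_ne_zero (RatFunc.num_ne_zero hf) (RatFunc.num_ne_zero hg)),
    rootMultiplicity_mul (mul_ne_zero (RatFunc.denom_ne_zero f) (RatFunc.denom_ne_zero g))]
  unfold ordAt
  push_cast
  ring

lemma lcAt_mul (hf : f ≠ 0) (hg : g ≠ 0) (p : ℂ) :
    lcAt (f * g) p = lcAt f p * lcAt g p := by
  rw [lcAt_rep (mul_ne_zero (RatFunc.num_ne_zero hf) (RatFunc.num_ne_zero hg))
    (mul_ne_zero (RatFunc.denom_ne_zero f) (RatFunc.denom_ne_zero g)) (mul_rep f g) p,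
    lcP_mul (RatFunc.num_ne_zero hf) (RatFunc.num_ne_zero hg),
    lcP_mul (RatFunc.denom_ne_zero f) (RatFunc.denom_ne_zero g),
    lcAt_eq, lcAt_eq, div_mul_div_comm]

lemma ordInf_mul (hf : f ≠ 0) (hg : g ≠ 0) :
    ordInf (f * g) = ordInf f + ordInf g := by
  rw [ordInf_rep (mul_ne_zero (RatFunc.num_ne_zero hf) (RatFunc.num_ne_zero hg))
    (mul_ne_zero (RatFunc.denom_ne_zero f) (RatFunc.denom_ne_zero g)) (mul_rep f g),
    natDegree_mul (RatFunc.num_ne_zero hf) (RatFunc.num_ne_zero hg),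
    natDegree_mul (RatFunc.denom_ne_zero f) (RatFunc.denom_ne_zero g)]
  unfold ordInf
  push_cast
  ring

lemma lcInf_mul (hf : f ≠ 0) (hg : g ≠ 0) :
    lcInf (f * g) = lcInf f * lcInf g := by
  rw [lcInf_rep (mul_ne_zero (RatFunc.num_ne_zero hf) (RatFunc.num_ne_zero hg))
    (mul_ne_zero (RatFunc.denom_ne_zero f) (RatFunc.denom_ne_zero g)) (mul_rep f g),
    leadingCoeff_mul, leadingCoeff_mul]
  unfold lcInf
  rw [div_mul_div_comm]

end Mul

section Symbol

lemma aux_left {m1 m2 n : ℤ} {a1 a2 b : ℂ} (ha1 : a1 ≠ 0) (ha2 : a2 ≠ 0) (hb : b ≠ 0) :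
    (-1 : ℂ) ^ ((m1 + m2) * n) * (a1 * a2) ^ (-n) * b ^ (m1 + m2)
      = ((-1 : ℂ) ^ (m1 * n) * a1 ^ (-n) * b ^ m1)
        * ((-1 : ℂ) ^ (m2 * n) * a2 ^ (-n) * b ^ m2) := by
  rw [add_mul, zpow_add₀ (by norm_num : (-1 : ℂ) ≠ 0), mul_zpow, zpow_add₀ hb]
  ring

lemma aux_right {m n1 n2 : ℤ} {a b1 b2 : ℂ} (ha : a ≠ 0) :
    (-1 : ℂ) ^ (m * (n1 + n2)) * a ^ (-(n1 + n2)) * (b1 * b2) ^ m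
      = ((-1 : ℂ) ^ (m * n1) * a ^ (-n1) * b1 ^ m)
        * ((-1 : ℂ) ^ (m * n2) * a ^ (-n2) * b2 ^ m) := by
  rw [mul_add, zpow_add₀ (by norm_num : (-1 : ℂ) ≠ 0), neg_add, zpow_add₀ ha, mul_zpow]
  ring

variable {f f' g g' : RatFunc ℂ}

lemma weilSymbolAt_mul_left (hf : f ≠ 0) (hf' : f' ≠ 0) (hg : g ≠ 0) (p : ℂ) :
    weilSymbolAt (f * f') g p = weilSymbolAt f g p * weilSymbolAt f' g p := by
  unfold weilSymbolAt
  rw [ordAt_mul hf hf' p, lcAt_mul hf hf' p]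
  exact aux_left (lcAt_ne_zero hf p) (lcAt_ne_zero hf' p) (lcAt_ne_zero hg p)

lemma weilSymbolAt_mul_right (hf : f ≠ 0) (hg : g ≠ 0) (hg' : g' ≠ 0) (p : ℂ) :
    weilSymbolAt f (g * g') p = weilSymbolAt f g p * weilSymbolAt f g' p := by
  unfold weilSymbolAt
  rw [ordAt_mul hg hg' p, lcAt_mul hg hg' p]
  exact aux_right (lcAt_ne_zero hf p)

lemma weilSymbolInf_mul_left (hf : f ≠ 0) (hf' : f' ≠ 0) (hg : g ≠ 0) :
    weilSymbolInf (f * f') g = weilSymbolInf f g * weilSymbolInf f' g := by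
  unfold weilSymbolInf
  rw [ordInf_mul hf hf', lcInf_mul hf hf']
  exact aux_left (lcInf_ne_zero hf) (lcInf_ne_zero hf') (lcInf_ne_zero hg)

lemma weilSymbolInf_mul_right (hf : f ≠ 0) (hg : g ≠ 0) (hg' : g' ≠ 0) :
    weilSymbolInf f (g * g') = weilSymbolInf f g * weilSymbolInf f g' := by
  unfold weilSymbolInf
  rw [ordInf_mul hg hg', lcInf_mul hg hg']
  exact aux_right (lcInf_ne_zero hf)

end Symbol

section One

lemma lcP_one (p : ℂ) : lcP (1 : Polynomial ℂ) p = 1 := by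
  unfold lcP
  rw [show (1 : Polynomial ℂ) = C 1 from (map_one C).symm, rootMultiplicity_C, pow_zero,
    divByMonic_one, eval_C]

lemma ordAt_one (p : ℂ) : ordAt (1 : RatFunc ℂ) p = 0 := by
  unfold ordAt
  rw [RatFunc.num_one, RatFunc.denom_one, sub_self]

lemma lcAt_one (p : ℂ) : lcAt (1 : RatFunc ℂ) p = 1 := by
  rw [lcAt_eq, RatFunc.num_one, RatFunc.denom_one, lcP_one, div_one]

lemma ordInf_one : ordInf (1 : RatFunc ℂ) = 0 := by
  unfold ordInf
  rw [RatFunc.num_one, RatFunc.denom_one, sub_self]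

lemma lcInf_one : lcInf (1 : RatFunc ℂ) = 1 := by
  unfold lcInf
  rw [RatFunc.num_one, RatFunc.denom_one, leadingCoeff_one, div_one]

lemma weilSymbolAt_one_left (g : RatFunc ℂ) (p : ℂ) : weilSymbolAt 1 g p = 1 := by
  unfold weilSymbolAt
  rw [ordAt_one, lcAt_one]
  simp

lemma weilSymbolAt_one_right (f : RatFunc ℂ) (p : ℂ) : weilSymbolAt f 1 p = 1 := by
  unfold weilSymbolAt
  rw [ordAt_one, lcAt_one]
  simp

lemma weilSymbolInf_one_left (g : RatFunc ℂ) : weilSymbolInf 1 g = 1 := by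
  unfold weilSymbolInf
  rw [ordInf_one, lcInf_one]
  simp

lemma weilSymbolInf_one_right (f : RatFunc ℂ) : weilSymbolInf f 1 = 1 := by
  unfold weilSymbolInf
  rw [ordInf_one, lcInf_one]
  simp

end One

section Gen

noncomputable def cst (c : ℂ) : RatFunc ℂ := algebraMap (Polynomial ℂ) _ (C c)

noncomputable def lin (a : ℂ) : RatFunc ℂ := algebraMap (Polynomial ℂ) _ (X - C a)

lemma cst_ne_zero {c : ℂ} (hc : c ≠ 0) : cst c ≠ 0 :=
  RatFunc.algebraMap_ne_zero (by simpa using hc)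

lemma lin_ne_zero (a : ℂ) : lin a ≠ 0 :=
  RatFunc.algebraMap_ne_zero (X_sub_C_ne_zero a)

lemma num_cst (c : ℂ) : (cst c).num = C c := RatFunc.num_algebraMap _
lemma denom_cst (c : ℂ) : (cst c).denom = 1 := RatFunc.denom_algebraMap _
lemma num_lin (a : ℂ) : (lin a).num = X - C a := RatFunc.num_algebraMap _
lemma denom_lin (a : ℂ) : (lin a).denom = 1 := RatFunc.denom_algebraMap _

lemma ordAt_cst (c : ℂ) (p : ℂ) : ordAt (cst c) p = 0 := by
  unfold ordAt
  rw [num_cst, denom_cst, rootMultiplicity_C, show (1 : Polynomial ℂ) = C 1 from (map_one C).symm,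
    rootMultiplicity_C, sub_self]

lemma lcAt_cst {c : ℂ} (p : ℂ) : lcAt (cst c) p = c := by
  rw [lcAt_eq, num_cst, denom_cst, lcP_one, div_one]
  unfold lcP
  rw [rootMultiplicity_C, pow_zero, divByMonic_one, eval_C]

lemma ordInf_cst (c : ℂ) : ordInf (cst c) = 0 := by
  unfold ordInf
  rw [num_cst, denom_cst, natDegree_C, natDegree_one]
  norm_num

lemma lcInf_cst (c : ℂ) : lcInf (cst c) = c := by
  unfold lcInf
  rw [num_cst, denom_cst, leadingCoeff_C, leadingCoeff_one, div_one]

lemma rm_lin_self (a : ℂ) : rootMultiplicity a (X - C a) = 1 :=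
  rootMultiplicity_X_sub_C_self

lemma rm_lin_ne {a p : ℂ} (hpa : p ≠ a) : rootMultiplicity p (X - C a) = 0 := by
  apply rootMultiplicity_eq_zero
  simp [IsRoot, sub_ne_zero.mpr hpa]

lemma ordAt_lin_self (a : ℂ) : ordAt (lin a) a = 1 := by
  unfold ordAt
  rw [num_lin, denom_lin, rm_lin_self, show (1 : Polynomial ℂ) = C 1 from (map_one C).symm,
    rootMultiplicity_C]
  norm_num

lemma ordAt_lin_ne {a p : ℂ} (hpa : p ≠ a) : ordAt (lin a) p = 0 := by
  unfold ordAt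
  rw [num_lin, denom_lin, rm_lin_ne hpa, show (1 : Polynomial ℂ) = C 1 from (map_one C).symm,
    rootMultiplicity_C, sub_self]

lemma lcAt_lin_self (a : ℂ) : lcAt (lin a) a = 1 := by
  rw [lcAt_eq, num_lin, denom_lin, lcP_one, div_one]
  unfold lcP
  rw [rm_lin_self, pow_one]
  have h := mul_divByMonic_cancel_left (1 : Polynomial ℂ) (monic_X_sub_C a)
  rw [mul_one] at h
  rw [h, eval_one]

lemma lcAt_lin_ne {a p : ℂ} (hpa : p ≠ a) : lcAt (lin a) p = p - a := by
  rw [lcAt_eq, num_lin, denom_lin, lcP_one, div_one]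
  unfold lcP
  rw [rm_lin_ne hpa, pow_zero, divByMonic_one]
  simp

lemma ordInf_lin (a : ℂ) : ordInf (lin a) = -1 := by
  unfold ordInf
  rw [num_lin, denom_lin, natDegree_X_sub_C, natDegree_one]
  norm_num

lemma lcInf_lin (a : ℂ) : lcInf (lin a) = 1 := by
  unfold lcInf
  rw [num_lin, denom_lin, (monic_X_sub_C a).leadingCoeff, leadingCoeff_one, div_one]

end Gen

section T

noncomputable def T (S : Finset ℂ) (f g : RatFunc ℂ) : ℂ :=
  (∏ p ∈ S, weilSymbolAt f g p) * weilSymbolInf f g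

variable {S : Finset ℂ} {f f' g g' : RatFunc ℂ}

lemma T_mul_left (hf : f ≠ 0) (hf' : f' ≠ 0) (hg : g ≠ 0) :
    T S (f * f') g = T S f g * T S f' g := by
  unfold T
  rw [weilSymbolInf_mul_left hf hf' hg,
    Finset.prod_congr rfl (fun p _ => weilSymbolAt_mul_left hf hf' hg p),
    Finset.prod_mul_distrib]
  ring

lemma T_mul_right (hf : f ≠ 0) (hg : g ≠ 0) (hg' : g' ≠ 0) :
    T S f (g * g') = T S f g * T S f g' := by
  unfold T
  rw [weilSymbolInf_mul_right hf hg hg',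
    Finset.prod_congr rfl (fun p _ => weilSymbolAt_mul_right hf hg hg' p),
    Finset.prod_mul_distrib]
  ring

lemma T_one_left : T S 1 g = 1 := by
  unfold T
  simp [weilSymbolAt_one_left, weilSymbolInf_one_left]

lemma T_one_right : T S f 1 = 1 := by
  unfold T
  simp [weilSymbolAt_one_right, weilSymbolInf_one_right]

lemma T_inv_right (hf : f ≠ 0) (hg : g ≠ 0) (h : T S f g = 1) : T S f g⁻¹ = 1 := by
  have h2 := T_mul_right (S := S) hf hg (inv_ne_zero hg)
  rw [mul_inv_cancel₀ hg, T_one_right, h, one_mul] at h2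
  exact h2.symm

lemma T_inv_left (hf : f ≠ 0) (hg : g ≠ 0) (h : T S f g = 1) : T S f⁻¹ g = 1 := by
  have h2 := T_mul_left (S := S) hf (inv_ne_zero hf) hg
  rw [mul_inv_cancel₀ hf, T_one_left, h, one_mul] at h2
  exact h2.symm

lemma weilSymbolAt_eq_one {p : ℂ} (h1 : ordAt f p = 0) (h2 : ordAt g p = 0) :
    weilSymbolAt f g p = 1 := by
  unfold weilSymbolAt
  rw [h1, h2]
  simp

end T

section Base

variable {S : Finset ℂ}

lemma T_cst_cst {c d : ℂ} (hc : c ≠ 0) (hd : d ≠ 0) : T S (cst c) (cst d) = 1 := by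
  unfold T weilSymbolInf
  rw [Finset.prod_congr rfl
    (fun p _ => weilSymbolAt_eq_one (ordAt_cst c p) (ordAt_cst d p)),
    Finset.prod_const_one, ordInf_cst, ordInf_cst]
  simp

lemma T_cst_lin {c b : ℂ} (hc : c ≠ 0) (hb : b ∈ S) : T S (cst c) (lin b) = 1 := by
  unfold T
  have hprod : ∏ p ∈ S, weilSymbolAt (cst c) (lin b) p = c⁻¹ := by
    rw [Finset.prod_eq_single b
      (fun p _ hpb => weilSymbolAt_eq_one (ordAt_cst c p) (ordAt_lin_ne hpb))
      (fun hb' => absurd hb hb')]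
    unfold weilSymbolAt
    rw [ordAt_cst, ordAt_lin_self, lcAt_cst, lcAt_lin_self]
    norm_num
  have hinf : weilSymbolInf (cst c) (lin b) = c := by
    unfold weilSymbolInf
    rw [ordInf_cst, ordInf_lin, lcInf_cst, lcInf_lin]
    norm_num
  rw [hprod, hinf, inv_mul_cancel₀ hc]

lemma T_lin_cst {a c : ℂ} (hc : c ≠ 0) (ha : a ∈ S) : T S (lin a) (cst c) = 1 := by
  unfold T
  have hprod : ∏ p ∈ S, weilSymbolAt (lin a) (cst c) p = c := by
    rw [Finset.prod_eq_single a
      (fun p _ hpa => weilSymbolAt_eq_one (ordAt_lin_ne hpa) (ordAt_cst c p))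
      (fun ha' => absurd ha ha')]
    unfold weilSymbolAt
    rw [ordAt_cst, ordAt_lin_self, lcAt_cst, lcAt_lin_self]
    norm_num
  have hinf : weilSymbolInf (lin a) (cst c) = c⁻¹ := by
    unfold weilSymbolInf
    rw [ordInf_cst, ordInf_lin, lcInf_cst, lcInf_lin]
    norm_num
  rw [hprod, hinf, mul_inv_cancel₀ hc]

lemma T_lin_self {a : ℂ} (ha : a ∈ S) : T S (lin a) (lin a) = 1 := by
  unfold T
  have hprod : ∏ p ∈ S, weilSymbolAt (lin a) (lin a) p = -1 := by
    rw [Finset.prod_eq_single a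
      (fun p _ hpa => weilSymbolAt_eq_one (ordAt_lin_ne hpa) (ordAt_lin_ne hpa))
      (fun ha' => absurd ha ha')]
    unfold weilSymbolAt
    rw [ordAt_lin_self, lcAt_lin_self]
    norm_num
  have hinf : weilSymbolInf (lin a) (lin a) = -1 := by
    unfold weilSymbolInf
    rw [ordInf_lin, lcInf_lin]
    norm_num
  rw [hprod, hinf]
  norm_num

lemma T_lin_lin {a b : ℂ} (hab : a ≠ b) (ha : a ∈ S) (hb : b ∈ S) :
    T S (lin a) (lin b) = 1 := by
  unfold T
  have hsub : ({a, b} : Finset ℂ) ⊆ S := by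
    intro x hx
    rcases Finset.mem_insert.mp hx with h | h
    · exact h ▸ ha
    · exact (Finset.mem_singleton.mp h) ▸ hb
  have hprod : ∏ p ∈ S, weilSymbolAt (lin a) (lin b) p
      = ∏ p ∈ ({a, b} : Finset ℂ), weilSymbolAt (lin a) (lin b) p := by
    refine (Finset.prod_subset hsub fun p _ hp => ?_).symm
    rw [Finset.mem_insert, Finset.mem_singleton] at hp
    push_neg at hp
    exact weilSymbolAt_eq_one (ordAt_lin_ne hp.1) (ordAt_lin_ne hp.2)
  have hA : weilSymbolAt (lin a) (lin b) a = a - b := by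
    unfold weilSymbolAt
    rw [ordAt_lin_self, ordAt_lin_ne hab, lcAt_lin_self, lcAt_lin_ne hab]
    norm_num
  have hB : weilSymbolAt (lin a) (lin b) b = (b - a)⁻¹ := by
    unfold weilSymbolAt
    rw [ordAt_lin_self, ordAt_lin_ne (Ne.symm hab), lcAt_lin_self, lcAt_lin_ne (Ne.symm hab)]
    norm_num
  have hinf : weilSymbolInf (lin a) (lin b) = -1 := by
    unfold weilSymbolInf
    rw [ordInf_lin, ordInf_lin, lcInf_lin, lcInf_lin]
    norm_num
  rw [hprod, Finset.prod_pair hab, hA, hB, hinf]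
  have h1 : b - a ≠ 0 := sub_ne_zero.mpr (Ne.symm hab)
  field_simp
  ring

end Base

section Glue

variable {S : Finset ℂ} {u g f : RatFunc ℂ}

lemma T_multiset_right (hu : u ≠ 0) {m : Multiset ℂ} (hm : ∀ b ∈ m, b ∈ S)
    (hl : ∀ b ∈ S, T S u (lin b) = 1) :
    (m.map lin).prod ≠ 0 ∧ T S u (m.map lin).prod = 1 := by
  induction m using Multiset.induction_on with
  | empty => simpa using T_one_right
  | cons b m ih =>
    have hb : b ∈ S := hm b (Multiset.mem_cons_self b m)
    obtain ⟨h0, h1⟩ := ih fun x hx => hm x (Multiset.mem_cons_of_mem hx)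
    refine ⟨by rw [Multiset.map_cons, Multiset.prod_cons]; exact mul_ne_zero (lin_ne_zero b) h0, ?_⟩
    rw [Multiset.map_cons, Multiset.prod_cons, T_mul_right hu (lin_ne_zero b) h0, hl b hb, h1,
      one_mul]

lemma T_multiset_left (hg : g ≠ 0) {m : Multiset ℂ} (hm : ∀ b ∈ m, b ∈ S)
    (hl : ∀ b ∈ S, T S (lin b) g = 1) :
    (m.map lin).prod ≠ 0 ∧ T S (m.map lin).prod g = 1 := by
  induction m using Multiset.induction_on with
  | empty => simpa using T_one_left
  | cons b m ih =>
    have hb : b ∈ S := hm b (Multiset.mem_cons_self b m)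
    obtain ⟨h0, h1⟩ := ih fun x hx => hm x (Multiset.mem_cons_of_mem hx)
    refine ⟨by rw [Multiset.map_cons, Multiset.prod_cons]; exact mul_ne_zero (lin_ne_zero b) h0, ?_⟩
    rw [Multiset.map_cons, Multiset.prod_cons, T_mul_left (lin_ne_zero b) h0 hg, hl b hb, h1,
      one_mul]

lemma alg_decomp {q : Polynomial ℂ} (hq : q ≠ 0) :
    algebraMap (Polynomial ℂ) (RatFunc ℂ) q
      = cst q.leadingCoeff * (q.roots.map lin).prod := by
  conv_lhs => rw [Splits.eq_prod_roots (IsAlgClosed.splits q)]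
  rw [map_mul, map_multiset_prod, Multiset.map_map]
  rfl

lemma T_alg_right (hu : u ≠ 0) {q : Polynomial ℂ} (hq : q ≠ 0)
    (hroots : ∀ b ∈ q.roots, b ∈ S)
    (hc : ∀ c : ℂ, c ≠ 0 → T S u (cst c) = 1)
    (hl : ∀ b ∈ S, T S u (lin b) = 1) :
    T S u (algebraMap (Polynomial ℂ) (RatFunc ℂ) q) = 1 := by
  obtain ⟨h0, h1⟩ := T_multiset_right hu hroots hl
  have hlc : q.leadingCoeff ≠ 0 := leadingCoeff_ne_zero.mpr hq
  rw [alg_decomp hq, T_mul_right hu (cst_ne_zero hlc) h0, hc _ hlc, h1, one_mul]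

lemma T_alg_left (hg : g ≠ 0) {q : Polynomial ℂ} (hq : q ≠ 0)
    (hroots : ∀ b ∈ q.roots, b ∈ S)
    (hc : ∀ c : ℂ, c ≠ 0 → T S (cst c) g = 1)
    (hl : ∀ b ∈ S, T S (lin b) g = 1) :
    T S (algebraMap (Polynomial ℂ) (RatFunc ℂ) q) g = 1 := by
  obtain ⟨h0, h1⟩ := T_multiset_left hg hroots hl
  have hlc : q.leadingCoeff ≠ 0 := leadingCoeff_ne_zero.mpr hq
  rw [alg_decomp hq, T_mul_left (cst_ne_zero hlc) h0 hg, hc _ hlc, h1, one_mul]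

lemma T_eq_one_right (hu : u ≠ 0) (hg : g ≠ 0)
    (hnum : ∀ b ∈ g.num.roots, b ∈ S) (hden : ∀ b ∈ g.denom.roots, b ∈ S)
    (hc : ∀ c : ℂ, c ≠ 0 → T S u (cst c) = 1)
    (hl : ∀ b ∈ S, T S u (lin b) = 1) :
    T S u g = 1 := by
  have hdec : g = algebraMap (Polynomial ℂ) (RatFunc ℂ) g.num
      * (algebraMap (Polynomial ℂ) (RatFunc ℂ) g.denom)⁻¹ := by
    rw [← div_eq_mul_inv, RatFunc.num_div_denom]
  have hn0 : algebraMap (Polynomial ℂ) (RatFunc ℂ) g.num ≠ 0 :=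
    RatFunc.algebraMap_ne_zero (RatFunc.num_ne_zero hg)
  have hd0 : algebraMap (Polynomial ℂ) (RatFunc ℂ) g.denom ≠ 0 :=
    RatFunc.algebraMap_ne_zero (RatFunc.denom_ne_zero g)
  rw [hdec, T_mul_right hu hn0 (inv_ne_zero hd0),
    T_alg_right hu (RatFunc.num_ne_zero hg) hnum hc hl,
    T_inv_right hu hd0 (T_alg_right hu (RatFunc.denom_ne_zero g) hden hc hl), one_mul]

lemma T_eq_one_left (hf : f ≠ 0) (hg : g ≠ 0)
    (hnum : ∀ b ∈ f.num.roots, b ∈ S) (hden : ∀ b ∈ f.denom.roots, b ∈ S)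
    (hc : ∀ c : ℂ, c ≠ 0 → T S (cst c) g = 1)
    (hl : ∀ b ∈ S, T S (lin b) g = 1) :
    T S f g = 1 := by
  have hdec : f = algebraMap (Polynomial ℂ) (RatFunc ℂ) f.num
      * (algebraMap (Polynomial ℂ) (RatFunc ℂ) f.denom)⁻¹ := by
    rw [← div_eq_mul_inv, RatFunc.num_div_denom]
  have hn0 : algebraMap (Polynomial ℂ) (RatFunc ℂ) f.num ≠ 0 :=
    RatFunc.algebraMap_ne_zero (RatFunc.num_ne_zero hf)
  have hd0 : algebraMap (Polynomial ℂ) (RatFunc ℂ) f.denom ≠ 0 :=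
    RatFunc.algebraMap_ne_zero (RatFunc.denom_ne_zero f)
  rw [hdec, T_mul_left hn0 (inv_ne_zero hd0) hg,
    T_alg_left hg (RatFunc.num_ne_zero hf) hnum hc hl,
    T_inv_left hd0 hg (T_alg_left hg (RatFunc.denom_ne_zero f) hden hc hl), one_mul]

lemma ordAt_ne_zero_of_num_root (hf : f ≠ 0) {b : ℂ} (hb : b ∈ f.num.roots) :
    ordAt f b ≠ 0 := by
  have h1 : 0 < f.num.rootMultiplicity b :=
    (rootMultiplicity_pos (RatFunc.num_ne_zero hf)).mpr
      ((mem_roots (RatFunc.num_ne_zero hf)).mp hb)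
  have h2 : f.denom.rootMultiplicity b = 0 := by
    by_contra h
    have hroot : IsRoot f.denom b := by
      by_contra hr
      exact h (rootMultiplicity_eq_zero hr)
    have hx : IsUnit (X - C b) := (RatFunc.isCoprime_num_denom f).isUnit_of_dvd'
      (dvd_iff_isRoot.mpr ((mem_roots (RatFunc.num_ne_zero hf)).mp hb))
      (dvd_iff_isRoot.mpr hroot)
    exact not_isUnit_X_sub_C b hx
  unfold ordAt
  omega

lemma ordAt_ne_zero_of_denom_root (hf : f ≠ 0) {b : ℂ} (hb : b ∈ f.denom.roots) :
    ordAt f b ≠ 0 := by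
  have h1 : 0 < f.denom.rootMultiplicity b :=
    (rootMultiplicity_pos (RatFunc.denom_ne_zero f)).mpr
      ((mem_roots (RatFunc.denom_ne_zero f)).mp hb)
  have h2 : f.num.rootMultiplicity b = 0 := by
    by_contra h
    have hroot : IsRoot f.num b := by
      by_contra hr
      exact h (rootMultiplicity_eq_zero hr)
    have hx : IsUnit (X - C b) := (RatFunc.isCoprime_num_denom f).isUnit_of_dvd'
      (dvd_iff_isRoot.mpr hroot)
      (dvd_iff_isRoot.mpr ((mem_roots (RatFunc.denom_ne_zero f)).mp hb))
    exact not_isUnit_X_sub_C b hx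
  unfold ordAt
  omega

end Glue

end WeilAux

/-- **Weil reciprocity for `ℂP¹`.** For nonzero rational functions
`f, g ∈ ℂ(X)`: the Weil symbol `{f, g}_p` equals `1` whenever `ord_p f = ord_p g = 0`
(hence for all but finitely many `p`), and for every finite set `S ⊆ ℂ` containing all the
zeros and poles of `f` and of `g`, the product of the symbols over `S ∪ {∞}` equals `1`. -/
theorem stmt2 (f g : RatFunc ℂ) (hf : f ≠ 0) (hg : g ≠ 0) :
    (∀ p : ℂ, ordAt f p = 0 → ordAt g p = 0 → weilSymbolAt f g p = 1) ∧
    ∀ S : Finset ℂ, (∀ p : ℂ, (ordAt f p ≠ 0 ∨ ordAt g p ≠ 0) → p ∈ S) →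
      (∏ p ∈ S, weilSymbolAt f g p) * weilSymbolInf f g = 1 := by
  constructor
  · exact fun p h1 h2 => WeilAux.weilSymbolAt_eq_one h1 h2
  · intro S hS
    have hfn : ∀ b ∈ f.num.roots, b ∈ S := fun b hb =>
      hS b (Or.inl (WeilAux.ordAt_ne_zero_of_num_root hf hb))
    have hfd : ∀ b ∈ f.denom.roots, b ∈ S := fun b hb =>
      hS b (Or.inl (WeilAux.ordAt_ne_zero_of_denom_root hf hb))
    have hgn : ∀ b ∈ g.num.roots, b ∈ S := fun b hb =>
      hS b (Or.inr (WeilAux.ordAt_ne_zero_of_num_root hg hb))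
    have hgd : ∀ b ∈ g.denom.roots, b ∈ S := fun b hb =>
      hS b (Or.inr (WeilAux.ordAt_ne_zero_of_denom_root hg hb))
    have hc : ∀ c : ℂ, c ≠ 0 → WeilAux.T S (WeilAux.cst c) g = 1 := fun c hc0 =>
      WeilAux.T_eq_one_right (WeilAux.cst_ne_zero hc0) hg hgn hgd
        (fun d hd => WeilAux.T_cst_cst hc0 hd)
        (fun b hb => WeilAux.T_cst_lin hc0 hb)
    have hl : ∀ a ∈ S, WeilAux.T S (WeilAux.lin a) g = 1 := fun a ha =>
      WeilAux.T_eq_one_right (WeilAux.lin_ne_zero a) hg hgn hgd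
        (fun d hd => WeilAux.T_lin_cst hd ha)
        (fun b hb => by
          by_cases hab : a = b
          · exact hab ▸ WeilAux.T_lin_self ha
          · exact WeilAux.T_lin_lin hab ha hb)
    exact WeilAux.T_eq_one_left hf hg hfn hfd hc hl
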